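/- arXiv:1808.01817 — 3 statements merged into one kernel-verified Lean document; each statement's English description precedes it below -/
import Mathlib

section
/- For n ≥ 2, 0 ≤ α ≤ 1 and x ∈ [0,1], the generalized Bernstein basis functions sum to one: ∑_{k=0}^{n} p_{n,k}^{(α)}(x) = 1, where p_{n,k}^{(α)}(x) = [C(n-2,k)(1-α)x + C(n-2,k-2)(1-α)(1-x) + C(n,k) α x(1-x)] x^{k-1} (1-x)^{n-k-1}. -/
open MeasureTheory Filter Finset Real

/-- Generalized Bernstein basis function `p_{n,k}^{(α)}(x)` (polynomial form). -/
noncomputable def bernP (n k : ℕ) (α x : ℝ) : ℝ :=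
  ((n - 2).choose k : ℝ) * (1 - α) * x ^ k * (1 - x) ^ (n - k - 1)
    + (if 2 ≤ k then (((n - 2).choose (k - 2)) : ℝ) else 0) * (1 - α) * x ^ (k - 1) * (1 - x) ^ (n - k)
    + (n.choose k : ℝ) * α * x ^ k * (1 - x) ^ (n - k)

/-- Euler Beta function. -/
noncomputable def betaR (e f : ℝ) : ℝ := Real.Gamma e * Real.Gamma f / Real.Gamma (e + f)

/-- The Beta density `μ_{n,ρ,k}`. -/
noncomputable def muD (n k : ℕ) (ρ t : ℝ) : ℝ :=
  t ^ ((k : ℝ) * ρ) * (1 - t) ^ (((n : ℝ) - (k : ℝ)) * ρ) /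
    betaR ((k : ℝ) * ρ + 1) (((n : ℝ) - (k : ℝ)) * ρ + 1)

/-- The generalized Bernstein–Durrmeyer operator. -/
noncomputable def G (n : ℕ) (α ρ : ℝ) (f : ℝ → ℝ) (x : ℝ) : ℝ :=
  ∑ k ∈ Finset.range (n + 1), bernP n k α x * ∫ t in (0:ℝ)..1, muD n k ρ t * f t

lemma bsum (m : ℕ) (x : ℝ) :
    ∑ k ∈ Finset.range (m + 1), (m.choose k : ℝ) * x ^ k * (1 - x) ^ (m - k) = 1 := by
  calc ∑ k ∈ Finset.range (m + 1), (m.choose k : ℝ) * x ^ k * (1 - x) ^ (m - k)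
      = (x + (1 - x)) ^ m := by
        rw [add_pow]
        exact Finset.sum_congr rfl fun k _ => by ring
    _ = 1 := by norm_num

theorem bernP_sum_eq_one (n : ℕ) (hn : 2 ≤ n) (α x : ℝ)
    (hα : α ∈ Set.Icc (0:ℝ) 1) (hx : x ∈ Set.Icc (0:ℝ) 1) :
    ∑ k ∈ Finset.range (n + 1), bernP n k α x = 1 := by
  obtain ⟨m, rfl⟩ : ∃ m, n = m + 2 := ⟨n - 2, by omega⟩
  have hsimp : ∀ k, bernP (m + 2) k α x
      = (m.choose k : ℝ) * (1 - α) * x ^ k * (1 - x) ^ (m + 1 - k)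
        + (if 2 ≤ k then ((m.choose (k - 2)) : ℝ) else 0) * (1 - α) * x ^ (k - 1)
            * (1 - x) ^ (m + 2 - k)
        + ((m + 2).choose k : ℝ) * α * x ^ k * (1 - x) ^ (m + 2 - k) := by
    intro k
    have e1 : m + 2 - 2 = m := by omega
    have e2 : m + 2 - k - 1 = m + 1 - k := by omega
    rw [bernP, e1, e2]
  have h1 : ∑ k ∈ Finset.range (m + 3),
      (m.choose k : ℝ) * (1 - α) * x ^ k * (1 - x) ^ (m + 1 - k) = (1 - α) * (1 - x) := by
    rw [← Finset.sum_subset (Finset.range_subset_range.mpr (by omega : m + 1 ≤ m + 3))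
      (fun k _ hk => by
        have : m < k := by simpa using hk
        simp [Nat.choose_eq_zero_of_lt this])]
    have hc : ∀ k ∈ Finset.range (m + 1),
        (m.choose k : ℝ) * (1 - α) * x ^ k * (1 - x) ^ (m + 1 - k)
        = ((1 - α) * (1 - x)) * ((m.choose k : ℝ) * x ^ k * (1 - x) ^ (m - k)) := by
      intro k hk
      have : m + 1 - k = (m - k) + 1 := by
        have := Finset.mem_range.mp hk; omega
      rw [this, pow_succ]; ring
    rw [Finset.sum_congr rfl hc, ← Finset.mul_sum, bsum, mul_one]
  have h2 : ∑ k ∈ Finset.range (m + 3),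
      (if 2 ≤ k then ((m.choose (k - 2)) : ℝ) else 0) * (1 - α) * x ^ (k - 1)
        * (1 - x) ^ (m + 2 - k) = (1 - α) * x := by
    rw [Finset.sum_range_succ' _ (m + 2), Finset.sum_range_succ' _ (m + 1)]
    simp only [show ∀ i : ℕ, (2 ≤ i + 1 + 1) = True from fun i => eq_true (by omega),
      show (2 ≤ (0:ℕ)) = False from eq_false (by omega),
      show (2 ≤ (0:ℕ) + 1) = False from eq_false (by omega),
      if_true, if_false, zero_mul, mul_zero, add_zero]
    have hc : ∀ k ∈ Finset.range (m + 1),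
        ((m.choose (k + 1 + 1 - 2)) : ℝ) * (1 - α)
          * x ^ (k + 1 + 1 - 1) * (1 - x) ^ (m + 2 - (k + 1 + 1))
        = ((1 - α) * x) * ((m.choose k : ℝ) * x ^ k * (1 - x) ^ (m - k)) := by
      intro k hk
      have e1 : k + 1 + 1 - 2 = k := by omega
      have e2 : k + 1 + 1 - 1 = k + 1 := by omega
      have e3 : m + 2 - (k + 1 + 1) = m - k := by omega
      rw [e1, e2, e3, pow_succ]; ring
    rw [Finset.sum_congr rfl hc, ← Finset.mul_sum, bsum, mul_one]
  have h3 : ∑ k ∈ Finset.range (m + 3),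
      ((m + 2).choose k : ℝ) * α * x ^ k * (1 - x) ^ (m + 2 - k) = α := by
    have hc : ∀ k ∈ Finset.range (m + 3),
        ((m + 2).choose k : ℝ) * α * x ^ k * (1 - x) ^ (m + 2 - k)
        = α * (((m + 2).choose k : ℝ) * x ^ k * (1 - x) ^ (m + 2 - k)) :=
      fun k _ => by ring
    rw [Finset.sum_congr rfl hc, ← Finset.mul_sum]
    rw [show m + 3 = (m + 2) + 1 from rfl] at *
    rw [bsum, mul_one]
  calc ∑ k ∈ Finset.range (m + 2 + 1), bernP (m + 2) k α x
      = ∑ k ∈ Finset.range (m + 3),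
          ((m.choose k : ℝ) * (1 - α) * x ^ k * (1 - x) ^ (m + 1 - k)
          + (if 2 ≤ k then ((m.choose (k - 2)) : ℝ) else 0) * (1 - α) * x ^ (k - 1)
              * (1 - x) ^ (m + 2 - k)
          + ((m + 2).choose k : ℝ) * α * x ^ k * (1 - x) ^ (m + 2 - k)) :=
        Finset.sum_congr rfl fun k _ => hsimp k
    _ = (1 - α) * (1 - x) + (1 - α) * x + α := by
        rw [Finset.sum_add_distrib, Finset.sum_add_distrib, h1, h2, h3]
    _ = 1 := by ring
end

section
/- For all n ≥ 2, 0 ≤ α ≤ 1, ρ > 0 and x ∈ [0,1], the second central moment is G_{n,ρ}^{(α)}((t−x)²; x) = [x(1−x)(ρ(n + (n − 2α + 2)ρ) − 6) + 2] / ((nρ+2)(nρ+3)). -/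
open MeasureTheory Filter Finset Real

/-! ### Auxiliary lemmas -/

lemma betaInt (a b : ℝ) (ha : 0 ≤ a) (hb : 0 ≤ b) :
    ∫ t in (0:ℝ)..1, t ^ a * (1 - t) ^ b = betaR (a + 1) (b + 1) := by
  have ha1 : (0:ℝ) < a + 1 := by linarith
  have hb1 : (0:ℝ) < b + 1 := by linarith
  have hab : (0:ℝ) < a + b + 2 := by linarith
  have key := Complex.Gamma_mul_Gamma_eq_betaIntegral
      (s := ((a + 1 : ℝ) : ℂ)) (t := ((b + 1 : ℝ) : ℂ))
      (by simpa using ha1) (by simpa using hb1)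
  have hBeta : Complex.betaIntegral ((a + 1 : ℝ) : ℂ) ((b + 1 : ℝ) : ℂ)
      = ((∫ t in (0:ℝ)..1, t ^ a * (1 - t) ^ b : ℝ) : ℂ) := by
    rw [Complex.betaIntegral, ← intervalIntegral.integral_ofReal]
    apply intervalIntegral.integral_congr
    intro t ht
    rw [Set.uIcc_of_le (by norm_num : (0:ℝ) ≤ 1)] at ht
    have ht0 : (0:ℝ) ≤ t := ht.1
    have h1t : (0:ℝ) ≤ 1 - t := by linarith [ht.2]
    simp only
    rw [show ((a + 1 : ℝ) : ℂ) - 1 = ((a : ℝ) : ℂ) by push_cast; ring,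
      show ((b + 1 : ℝ) : ℂ) - 1 = ((b : ℝ) : ℂ) by push_cast; ring,
      Complex.ofReal_mul, Complex.ofReal_cpow ht0, Complex.ofReal_cpow h1t,
      Complex.ofReal_sub, Complex.ofReal_one]
  rw [hBeta, show ((a + 1 : ℝ) : ℂ) + ((b + 1 : ℝ) : ℂ) = ((a + b + 2 : ℝ) : ℂ) by
    push_cast; ring] at key
  rw [Complex.Gamma_ofReal, Complex.Gamma_ofReal, Complex.Gamma_ofReal,
    ← Complex.ofReal_mul, ← Complex.ofReal_mul] at key
  have realeq : Real.Gamma (a + 1) * Real.Gamma (b + 1)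
      = Real.Gamma (a + b + 2) * ∫ t in (0:ℝ)..1, t ^ a * (1 - t) ^ b := by
    exact_mod_cast key
  have hΓ : Real.Gamma (a + b + 2) ≠ 0 := (Real.Gamma_pos_of_pos hab).ne'
  rw [betaR, show a + 1 + (b + 1) = a + b + 2 by ring, eq_div_iff hΓ]
  linear_combination -realeq

lemma cont_int (c d : ℝ) (hc : 0 ≤ c) (hd : 0 ≤ d) :
    IntervalIntegrable (fun t : ℝ => t ^ c * (1 - t) ^ d) MeasureTheory.volume 0 1 := by
  apply Continuous.intervalIntegrable
  exact (Real.continuous_rpow_const hc).mul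
    ((Real.continuous_rpow_const hd).comp (continuous_const.sub continuous_id))

lemma momentInt (a b x : ℝ) (ha : 0 ≤ a) (hb : 0 ≤ b) :
    (∫ t in (0:ℝ)..1, t ^ a * (1 - t) ^ b / betaR (a + 1) (b + 1) * (t - x) ^ 2)
      = (a + 1) * (a + 2) / ((a + b + 2) * (a + b + 3))
        - 2 * x * ((a + 1) / (a + b + 2)) + x ^ 2 := by
  have h1 : (0:ℝ) < a + 1 := by linarith
  have h2 : (0:ℝ) < a + 2 := by linarith
  have hb1 : (0:ℝ) < b + 1 := by linarith
  have hs2 : (0:ℝ) < a + b + 2 := by linarith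
  have hs3 : (0:ℝ) < a + b + 3 := by linarith
  have G1 := Real.Gamma_pos_of_pos h1
  have Gb := Real.Gamma_pos_of_pos hb1
  have Gs := Real.Gamma_pos_of_pos hs2
  have hcong : Set.EqOn
      (fun t : ℝ => t ^ a * (1 - t) ^ b / betaR (a + 1) (b + 1) * (t - x) ^ 2)
      (fun t : ℝ => (t ^ (a + 2) * (1 - t) ^ b - 2 * x * (t ^ (a + 1) * (1 - t) ^ b)
        + x ^ 2 * (t ^ a * (1 - t) ^ b)) / betaR (a + 1) (b + 1)) (Set.uIcc 0 1) := by
    intro t ht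
    rw [Set.uIcc_of_le (by norm_num : (0:ℝ) ≤ 1)] at ht
    have ht0 : (0:ℝ) ≤ t := ht.1
    have e2 : t ^ (a + 2) = t ^ a * t ^ 2 := by
      rw [Real.rpow_add' ht0 h2.ne', show ((2:ℝ)) = ((2:ℕ):ℝ) by norm_num,
        Real.rpow_natCast]
    have e1 : t ^ (a + 1) = t ^ a * t := by
      rw [Real.rpow_add' ht0 h1.ne', Real.rpow_one]
    simp only
    rw [e2, e1]; ring
  rw [intervalIntegral.integral_congr hcong]
  have i0 := cont_int a b ha hb
  have i1 := cont_int (a + 1) b (by linarith) hb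
  have i2 := cont_int (a + 2) b (by linarith) hb
  rw [intervalIntegral.integral_div,
    intervalIntegral.integral_add (i2.sub (i1.const_mul (2 * x))) (i0.const_mul (x ^ 2)),
    intervalIntegral.integral_sub i2 (i1.const_mul (2 * x)),
    intervalIntegral.integral_const_mul, intervalIntegral.integral_const_mul,
    betaInt a b ha hb, betaInt (a + 1) b (by linarith) hb, betaInt (a + 2) b (by linarith) hb]
  have e0 : betaR (a + 1) (b + 1)
      = Real.Gamma (a + 1) * Real.Gamma (b + 1) / Real.Gamma (a + b + 2) := by
    rw [betaR, show a + 1 + (b + 1) = a + b + 2 by ring]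
  have e1' : betaR (a + 1 + 1) (b + 1)
      = ((a + 1) * Real.Gamma (a + 1)) * Real.Gamma (b + 1)
        / ((a + b + 2) * Real.Gamma (a + b + 2)) := by
    rw [betaR, Real.Gamma_add_one h1.ne',
      show a + 1 + 1 + (b + 1) = a + b + 2 + 1 by ring, Real.Gamma_add_one hs2.ne']
  have e2' : betaR (a + 2 + 1) (b + 1)
      = ((a + 2) * ((a + 1) * Real.Gamma (a + 1))) * Real.Gamma (b + 1)
        / ((a + b + 3) * ((a + b + 2) * Real.Gamma (a + b + 2))) := by
    rw [betaR, show a + 2 + 1 + (b + 1) = a + b + 3 + 1 by ring,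
      Real.Gamma_add_one hs3.ne', show a + b + 3 = a + b + 2 + 1 by ring,
      Real.Gamma_add_one hs2.ne', Real.Gamma_add_one h2.ne',
      show a + 2 = a + 1 + 1 by ring, Real.Gamma_add_one h1.ne']
  rw [e0, e1', e2']
  field_simp

/-- Plain Bernstein basis. -/
noncomputable def Bb (m k : ℕ) (x : ℝ) : ℝ := (m.choose k : ℝ) * x ^ k * (1 - x) ^ (m - k)

lemma Bb_eval (m k : ℕ) (x : ℝ) : (bernsteinPolynomial ℝ m k).eval x = Bb m k x := by
  simp [bernsteinPolynomial, Bb]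

lemma sum_Bb (m : ℕ) (x : ℝ) : ∑ k ∈ Finset.range (m + 1), Bb m k x = 1 := by
  have h := congrArg (Polynomial.eval x) (bernsteinPolynomial.sum ℝ m)
  simpa [Polynomial.eval_finset_sum, Bb_eval] using h

lemma sum_k_Bb (m : ℕ) (x : ℝ) :
    ∑ k ∈ Finset.range (m + 1), (k : ℝ) * Bb m k x = (m : ℝ) * x := by
  have h := congrArg (Polynomial.eval x) (bernsteinPolynomial.sum_smul ℝ m)
  simpa [Polynomial.eval_finset_sum, Bb_eval, nsmul_eq_mul] using h

lemma sum_kk_Bb (m : ℕ) (x : ℝ) :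
    ∑ k ∈ Finset.range (m + 1), (k : ℝ) * ((k : ℝ) - 1) * Bb m k x
      = (m : ℝ) * ((m : ℝ) - 1) * x ^ 2 := by
  have h := congrArg (Polynomial.eval x) (bernsteinPolynomial.sum_mul_smul ℝ m)
  have hc : ∀ j : ℕ, ((j * (j - 1) : ℕ) : ℝ) = (j : ℝ) * ((j : ℝ) - 1) := by
    intro j
    cases j with
    | zero => simp
    | succ i => push_cast [Nat.succ_sub_one]; ring
  simp only [Polynomial.eval_finset_sum, nsmul_eq_mul, Polynomial.eval_mul,
    Polynomial.eval_natCast, Polynomial.eval_pow, Polynomial.eval_X, Bb_eval] at h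
  simp_rw [hc] at h
  simpa using h

lemma sum_quad (m : ℕ) (x A B C : ℝ) :
    ∑ k ∈ Finset.range (m + 1), (A * (k : ℝ) ^ 2 + B * (k : ℝ) + C) * Bb m k x
      = A * ((m : ℝ) * ((m : ℝ) - 1) * x ^ 2 + (m : ℝ) * x) + B * ((m : ℝ) * x) + C := by
  have h : ∀ k ∈ Finset.range (m + 1),
      (A * (k : ℝ) ^ 2 + B * (k : ℝ) + C) * Bb m k x
        = A * ((k : ℝ) * ((k : ℝ) - 1) * Bb m k x) + (A + B) * ((k : ℝ) * Bb m k x)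
          + C * Bb m k x := by
    intro k _; ring
  rw [Finset.sum_congr rfl h, Finset.sum_add_distrib, Finset.sum_add_distrib,
    ← Finset.mul_sum, ← Finset.mul_sum, ← Finset.mul_sum, sum_kk_Bb, sum_k_Bb, sum_Bb]
  ring

lemma shift2 (f : ℕ → ℝ) (hf0 : f 0 = 0) (hf1 : f 1 = 0) (m : ℕ) :
    ∑ k ∈ Finset.range (m + 2 + 1), f k = ∑ i ∈ Finset.range (m + 1), f (i + 2) := by
  rw [Finset.sum_range_succ' f (m + 2), show m + 2 = m + 1 + 1 from rfl,
    Finset.sum_range_succ' (fun i => f (i + 1)) (m + 1)]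
  simp [hf0, hf1]

lemma big_sum (m : ℕ) (α x A B C : ℝ) :
    ∑ k ∈ Finset.range (m + 2 + 1), bernP (m + 2) k α x * (A * (k : ℝ) ^ 2 + B * (k : ℝ) + C)
      = (1 - α) * (1 - x)
          * (A * ((m : ℝ) * ((m : ℝ) - 1) * x ^ 2 + (m : ℝ) * x) + B * ((m : ℝ) * x) + C)
        + (1 - α) * x
          * (A * ((m : ℝ) * ((m : ℝ) - 1) * x ^ 2 + (m : ℝ) * x)
            + (4 * A + B) * ((m : ℝ) * x) + (4 * A + 2 * B + C))
        + α * (A * (((m : ℝ) + 2) * (((m : ℝ) + 2) - 1) * x ^ 2 + ((m : ℝ) + 2) * x)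
            + B * (((m : ℝ) + 2) * x) + C) := by
  have hq : ∀ k : ℕ, bernP (m + 2) k α x * (A * (k : ℝ) ^ 2 + B * (k : ℝ) + C)
      = ((m.choose k : ℝ) * (1 - α) * x ^ k * (1 - x) ^ (m + 2 - k - 1))
          * (A * (k : ℝ) ^ 2 + B * (k : ℝ) + C)
        + ((if 2 ≤ k then ((m.choose (k - 2)) : ℝ) else 0) * (1 - α) * x ^ (k - 1)
            * (1 - x) ^ (m + 2 - k)) * (A * (k : ℝ) ^ 2 + B * (k : ℝ) + C)
        + (((m + 2).choose k : ℝ) * α * x ^ k * (1 - x) ^ (m + 2 - k))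
          * (A * (k : ℝ) ^ 2 + B * (k : ℝ) + C) := by
    intro k
    simp only [bernP, Nat.add_sub_cancel]
    ring
  simp only [hq]
  rw [Finset.sum_add_distrib, Finset.sum_add_distrib]
  have hS1 : ∑ k ∈ Finset.range (m + 2 + 1),
      ((m.choose k : ℝ) * (1 - α) * x ^ k * (1 - x) ^ (m + 2 - k - 1))
        * (A * (k : ℝ) ^ 2 + B * (k : ℝ) + C)
      = (1 - α) * (1 - x)
          * (A * ((m : ℝ) * ((m : ℝ) - 1) * x ^ 2 + (m : ℝ) * x) + B * ((m : ℝ) * x) + C) := by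
    have step : ∀ k ∈ Finset.range (m + 2 + 1),
        ((m.choose k : ℝ) * (1 - α) * x ^ k * (1 - x) ^ (m + 2 - k - 1))
          * (A * (k : ℝ) ^ 2 + B * (k : ℝ) + C)
        = (1 - α) * (1 - x) * ((A * (k : ℝ) ^ 2 + B * (k : ℝ) + C) * Bb m k x) := by
      intro k _
      by_cases hkm : k ≤ m
      · rw [show m + 2 - k - 1 = (m - k) + 1 by omega]
        simp only [Bb]; ring
      · rw [Nat.choose_eq_zero_of_lt (by omega)]
        simp [Bb, Nat.choose_eq_zero_of_lt (show m < k by omega)]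
    rw [Finset.sum_congr rfl step, ← Finset.mul_sum]
    have hz : ∀ k ∈ Finset.range (m + 2 + 1), k ∉ Finset.range (m + 1) →
        (A * (k : ℝ) ^ 2 + B * (k : ℝ) + C) * Bb m k x = 0 := by
      intro k _ hk
      have : m < k := by simpa [Finset.mem_range, Nat.lt_succ_iff] using hk
      simp [Bb, Nat.choose_eq_zero_of_lt this]
    rw [← Finset.sum_subset (Finset.range_subset_range.2 (by omega)) hz, sum_quad]
  have hS2 : ∑ k ∈ Finset.range (m + 2 + 1),
      ((if 2 ≤ k then ((m.choose (k - 2)) : ℝ) else 0) * (1 - α) * x ^ (k - 1)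
        * (1 - x) ^ (m + 2 - k)) * (A * (k : ℝ) ^ 2 + B * (k : ℝ) + C)
      = (1 - α) * x
          * (A * ((m : ℝ) * ((m : ℝ) - 1) * x ^ 2 + (m : ℝ) * x)
            + (4 * A + B) * ((m : ℝ) * x) + (4 * A + 2 * B + C)) := by
    rw [shift2 _ (by norm_num) (by norm_num) m]
    have step : ∀ i ∈ Finset.range (m + 1),
        (if 2 ≤ i + 2 then ((m.choose (i + 2 - 2)) : ℝ) else 0) * (1 - α) * x ^ (i + 2 - 1)
          * (1 - x) ^ (m + 2 - (i + 2))
          * (A * ((i + 2 : ℕ) : ℝ) ^ 2 + B * ((i + 2 : ℕ) : ℝ) + C)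
        = (1 - α) * x * ((A * (i : ℝ) ^ 2 + (4 * A + B) * (i : ℝ) + (4 * A + 2 * B + C))
            * Bb m i x) := by
      intro i _
      rw [if_pos (by omega), show i + 2 - 2 = i from rfl, show i + 2 - 1 = i + 1 from rfl,
        show m + 2 - (i + 2) = m - i by omega]
      simp only [Bb]
      push_cast
      ring
    rw [Finset.sum_congr rfl step, ← Finset.mul_sum, sum_quad]
  have hS3 : ∑ k ∈ Finset.range (m + 2 + 1),
      (((m + 2).choose k : ℝ) * α * x ^ k * (1 - x) ^ (m + 2 - k))
        * (A * (k : ℝ) ^ 2 + B * (k : ℝ) + C)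
      = α * (A * (((m : ℝ) + 2) * (((m : ℝ) + 2) - 1) * x ^ 2 + ((m : ℝ) + 2) * x)
          + B * (((m : ℝ) + 2) * x) + C) := by
    have step : ∀ k ∈ Finset.range (m + 2 + 1),
        (((m + 2).choose k : ℝ) * α * x ^ k * (1 - x) ^ (m + 2 - k))
          * (A * (k : ℝ) ^ 2 + B * (k : ℝ) + C)
        = α * ((A * (k : ℝ) ^ 2 + B * (k : ℝ) + C) * Bb (m + 2) k x) := by
      intro k _; simp only [Bb]; ring
    rw [Finset.sum_congr rfl step, ← Finset.mul_sum, sum_quad]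
    push_cast
    ring
  rw [hS1, hS2, hS3]

theorem G_central_moment_two (n : ℕ) (hn : 2 ≤ n) (α ρ : ℝ)
    (hα : α ∈ Set.Icc (0:ℝ) 1) (hρ : 0 < ρ) (x : ℝ) (hx : x ∈ Set.Icc (0:ℝ) 1) :
    G n α ρ (fun t => (t - x) ^ 2) x =
      (x * (1 - x) * (ρ * ((n : ℝ) + ((n : ℝ) - 2 * α + 2) * ρ) - 6) + 2) /
      (((n : ℝ) * ρ + 2) * ((n : ℝ) * ρ + 3)) := by
  obtain ⟨m, rfl⟩ : ∃ m, n = m + 2 := ⟨n - 2, by omega⟩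
  have hNn : (0:ℝ) ≤ ((m : ℝ) + 2) * ρ := mul_nonneg (by positivity) hρ.le
  have hD2 : (0:ℝ) < ((m : ℝ) + 2) * ρ + 2 := by linarith
  have hD3 : (0:ℝ) < ((m : ℝ) + 2) * ρ + 3 := by linarith
  simp only [G]
  have hint : ∀ k ∈ Finset.range (m + 2 + 1),
      bernP (m + 2) k α x * (∫ t in (0:ℝ)..1, muD (m + 2) k ρ t * (t - x) ^ 2)
        = bernP (m + 2) k α x *
            ((ρ ^ 2 * (k : ℝ) ^ 2
              + (3 * ρ - 2 * x * ρ * (((m : ℝ) + 2) * ρ + 3)) * (k : ℝ)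
              + (2 - 2 * x * (((m : ℝ) + 2) * ρ + 3)
                  + x ^ 2 * ((((m : ℝ) + 2) * ρ + 2) * (((m : ℝ) + 2) * ρ + 3))))
              / ((((m : ℝ) + 2) * ρ + 2) * (((m : ℝ) + 2) * ρ + 3))) := by
    intro k hk
    congr 1
    have hkle : k ≤ m + 2 := by
      have := Finset.mem_range.1 hk; omega
    have hk2 : (k : ℝ) ≤ (m : ℝ) + 2 := by exact_mod_cast hkle
    have ha : (0:ℝ) ≤ (k : ℝ) * ρ := mul_nonneg (Nat.cast_nonneg k) hρ.le
    have hb : (0:ℝ) ≤ (((m + 2 : ℕ) : ℝ) - (k : ℝ)) * ρ := by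
      apply mul_nonneg _ hρ.le
      push_cast
      linarith
    simp only [muD]
    rw [momentInt _ _ x ha hb,
      show (k : ℝ) * ρ + (((m + 2 : ℕ) : ℝ) - (k : ℝ)) * ρ = ((m : ℝ) + 2) * ρ by
        push_cast; ring]
    field_simp
    ring
  rw [Finset.sum_congr rfl hint]
  simp_rw [← mul_div_assoc]
  rw [← Finset.sum_div, big_sum]
  push_cast
  field_simp
  ring
end

section
/- For fixed 0 ≤ α ≤ 1 and ρ > 0, there exists a positive constant X (depending only on α and ρ) such that for all n ≥ 2 and all x ∈ [0,1], G_{n,ρ}^{(α)}((t−x)²; x) ≤ X · x(1−x)/(1 + nρ) + X/(1+nρ)², equivalently (using x(1−x) ≤ 1/4) the second central moment is bounded by a constant times x(1−x)/(1+nρ) plus a term of order (1+nρ)^{-2}; in particular G_{n,ρ}^{(α)}((t−x)²;x) ≤ X/(1+nρ) for all x ∈ [0,1]. -/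
open MeasureTheory Filter Finset Real

/-! ### Auxiliary lemmas -/

lemma cont_rpow (c : ℝ) (hc : 0 ≤ c) : Continuous fun t : ℝ => t ^ c :=
  continuous_iff_continuousAt.2 fun x => Real.continuousAt_rpow_const x c (Or.inr hc)

lemma real_beta_integral {a b : ℝ} (ha : 0 < a) (hb : 0 < b) :
    ∫ t in (0:ℝ)..1, t ^ (a - 1) * (1 - t) ^ (b - 1) = betaR a b := by
  have key : Complex.betaIntegral a b = ((∫ t in (0:ℝ)..1, t ^ (a-1) * (1-t) ^ (b-1) : ℝ) : ℂ) := by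
    rw [Complex.betaIntegral, ← intervalIntegral.integral_ofReal]
    refine intervalIntegral.integral_congr fun t ht => ?_
    rw [Set.uIcc_of_le (by norm_num : (0:ℝ) ≤ 1)] at ht
    rw [Complex.ofReal_mul, Complex.ofReal_cpow ht.1 (a-1),
      Complex.ofReal_cpow (by linarith [ht.2] : (0:ℝ) ≤ 1 - t) (b-1)]
    push_cast; ring
  have h := Complex.Gamma_mul_Gamma_eq_betaIntegral (s := a) (t := b) (by simpa using ha) (by simpa using hb)
  rw [key] at h
  have h2 : Real.Gamma a * Real.Gamma b = Real.Gamma (a+b) * ∫ t in (0:ℝ)..1, t ^ (a-1) * (1-t) ^ (b-1) := by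
    have : ((Real.Gamma a * Real.Gamma b : ℝ) : ℂ) = ((Real.Gamma (a+b) * ∫ t in (0:ℝ)..1, t ^ (a-1) * (1-t) ^ (b-1) : ℝ) : ℂ) := by
      push_cast
      rw [← Complex.Gamma_ofReal, ← Complex.Gamma_ofReal, ← Complex.Gamma_ofReal]
      push_cast
      rw [h]
    exact_mod_cast this
  rw [betaR, eq_div_iff (Real.Gamma_pos_of_pos (by linarith : (0:ℝ) < a+b)).ne', h2]; ring

lemma betaR_pos {e f : ℝ} (he : 0 < e) (hf : 0 < f) : 0 < betaR e f :=
  div_pos (mul_pos (Real.Gamma_pos_of_pos he) (Real.Gamma_pos_of_pos hf))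
    (Real.Gamma_pos_of_pos (by linarith))

lemma int_pow {a b : ℝ} (ha : 0 ≤ a) (hb : 0 ≤ b) (j : ℕ) :
    ∫ t in (0:ℝ)..1, t ^ a * (1 - t) ^ b * t ^ j = betaR (a + j + 1) (b + 1) := by
  have := real_beta_integral (a := a + j + 1) (b := b + 1) (by positivity) (by positivity)
  rw [← this]
  refine intervalIntegral.integral_congr fun t ht => ?_
  rw [Set.uIcc_of_le (by norm_num : (0:ℝ) ≤ 1)] at ht
  have h1 : (a + ↑j + 1 - 1 : ℝ) = a + j := by ring
  have h2 : (b + 1 - 1 : ℝ) = b := by ring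
  rw [h1, h2]
  rcases Nat.eq_zero_or_pos j with hj | hj
  · subst hj; simp
  · rw [Real.rpow_add' ht.1 (by positivity), Real.rpow_natCast]; ring

lemma moment_integral {a b : ℝ} (x : ℝ) (ha : 0 ≤ a) (hb : 0 ≤ b) :
    ∫ t in (0:ℝ)..1, (t ^ a * (1 - t) ^ b / betaR (a + 1) (b + 1)) * (t - x) ^ 2
      = (a+1)*(a+2)/((a+b+2)*(a+b+3)) - 2*x*(a+1)/(a+b+2) + x^2 := by
  have hd : 0 < betaR (a + 1) (b + 1) := betaR_pos (by linarith) (by linarith)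
  have cg : Continuous fun t : ℝ => t ^ a * (1 - t) ^ b :=
    (cont_rpow a ha).mul ((cont_rpow b hb).comp (continuous_const.sub continuous_id))
  have hI : ∀ j : ℕ, IntervalIntegrable (fun t : ℝ => t ^ a * (1 - t) ^ b * t ^ j)
      MeasureTheory.volume 0 1 := fun j => (cg.mul (continuous_pow j)).intervalIntegrable 0 1
  have step1 : ∀ t : ℝ, (t ^ a * (1 - t) ^ b / betaR (a + 1) (b + 1)) * (t - x) ^ 2
      = (betaR (a + 1) (b + 1))⁻¹ * ((t ^ a * (1 - t) ^ b * t ^ 2)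
        - 2 * x * (t ^ a * (1 - t) ^ b * t ^ 1) + x ^ 2 * (t ^ a * (1 - t) ^ b * t ^ 0)) := by
    intro t; field_simp; ring
  simp_rw [step1]
  rw [intervalIntegral.integral_const_mul, intervalIntegral.integral_add ((hI 2).sub (((hI 1).const_mul _))) ((hI 0).const_mul _),
    intervalIntegral.integral_sub (hI 2) ((hI 1).const_mul _),
    intervalIntegral.integral_const_mul, intervalIntegral.integral_const_mul,
    int_pow ha hb 2, int_pow ha hb 1, int_pow ha hb 0]
  have g1 : ∀ c : ℝ, 0 < c → Real.Gamma (c + 1) = c * Real.Gamma c := fun c hc => Real.Gamma_add_one hc.ne'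
  have hGab : Real.Gamma (a+b+2+1) = (a+b+2) * Real.Gamma (a+b+2) := g1 _ (by linarith)
  have hGab2 : Real.Gamma (a+b+2+1+1) = (a+b+3) * ((a+b+2) * Real.Gamma (a+b+2)) := by
    rw [g1 _ (by linarith : (0:ℝ) < a+b+2+1), hGab]; ring_nf
  have hGa1 : Real.Gamma (a+1+1) = (a+1) * Real.Gamma (a+1) := g1 _ (by linarith)
  have hGa2 : Real.Gamma (a+1+1+1) = (a+2) * ((a+1) * Real.Gamma (a+1)) := by
    rw [g1 _ (by linarith : (0:ℝ) < a+1+1), hGa1]; ring_nf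
  have e2 : betaR (a + 2 + 1) (b + 1) = (a+2)*(a+1)/((a+b+3)*(a+b+2)) * betaR (a + 1) (b + 1) := by
    unfold betaR
    rw [show (a + 2 + 1 : ℝ) = a+1+1+1 by ring, hGa2,
      show (a + 1 + 1 + 1 + (b + 1) : ℝ) = a+b+2+1+1 by ring, hGab2,
      show (a + 1 + (b + 1) : ℝ) = a + b + 2 by ring]
    have h1 := (Real.Gamma_pos_of_pos (show (0:ℝ) < a + b + 2 by linarith)).ne'
    field_simp
  have e1 : betaR (a + 1 + 1) (b + 1) = (a+1)/(a+b+2) * betaR (a + 1) (b + 1) := by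
    unfold betaR
    rw [hGa1, show (a + 1 + 1 + (b + 1) : ℝ) = a+b+2+1 by ring, hGab,
      show (a + 1 + (b + 1) : ℝ) = a + b + 2 by ring]
    have h1 := (Real.Gamma_pos_of_pos (show (0:ℝ) < a + b + 2 by linarith)).ne'
    field_simp
  push_cast
  rw [show ((a:ℝ) + 2 + 1) = a + 2 + 1 from rfl, e2,
    show ((a:ℝ) + 1 + 1) = a + 1 + 1 from rfl, e1,
    show ((a:ℝ) + 0 + 1) = a + 1 by ring]
  have h2 : (0:ℝ) < a + b + 2 := by linarith
  have h3 : (0:ℝ) < a + b + 3 := by linarith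
  field_simp

/-! ### Bernstein sums -/

noncomputable def bbG (m k : ℕ) (x : ℝ) : ℝ := (m.choose k : ℝ) * x ^ k * (1 - x) ^ (m - k)

lemma bbG_eval (m k : ℕ) (x : ℝ) : (bernsteinPolynomial ℝ m k).eval x = bbG m k x := by
  simp [bernsteinPolynomial, bbG]

lemma bbG0 (m : ℕ) (x : ℝ) : ∑ k ∈ range (m+1), bbG m k x = 1 := by
  have := congrArg (Polynomial.eval x) (bernsteinPolynomial.sum ℝ m)
  simpa [Polynomial.eval_finset_sum, bbG_eval] using this

lemma bbG1 (m : ℕ) (x : ℝ) : ∑ k ∈ range (m+1), (k:ℝ) * bbG m k x = m * x := by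
  have := congrArg (Polynomial.eval x) (bernsteinPolynomial.sum_smul ℝ m)
  simpa [Polynomial.eval_finset_sum, bbG_eval, mul_comm] using this

lemma bbG2 (m : ℕ) (x : ℝ) : ∑ k ∈ range (m+1), (k:ℝ) * ((k:ℝ) - 1) * bbG m k x = m * (m-1) * x^2 := by
  have this := congrArg (Polynomial.eval x) (bernsteinPolynomial.sum_mul_smul ℝ m)
  simp [Polynomial.eval_finset_sum, bbG_eval] at this
  have l : ∑ k ∈ range (m+1), (k:ℝ) * ((k:ℝ) - 1) * bbG m k x
      = ∑ k ∈ range (m+1), (k:ℝ) * ((k - 1 : ℕ):ℝ) * bbG m k x := by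
    refine sum_congr rfl fun k _ => ?_
    rcases Nat.eq_zero_or_pos k with h|h
    · subst h; simp
    · rw [Nat.cast_sub h]; norm_num
  rw [l, this]
  rcases Nat.eq_zero_or_pos m with h|h
  · subst h; simp
  · rw [Nat.cast_sub h]; norm_num

lemma bbGcomb (m : ℕ) (x p q r : ℝ) :
    ∑ k ∈ range (m+1), bbG m k x * (p + q * k + r * k * ((k:ℝ) - 1))
      = p + q * m * x + r * (m * ((m:ℝ)-1) * x^2) := by
  have h : ∀ k ∈ range (m+1), bbG m k x * (p + q * k + r * k * ((k:ℝ)-1))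
      = p * bbG m k x + q * ((k:ℝ) * bbG m k x) + r * ((k:ℝ) * ((k:ℝ)-1) * bbG m k x) := by
    intro k _; ring
  rw [Finset.sum_congr rfl h, Finset.sum_add_distrib, Finset.sum_add_distrib,
    ← Finset.mul_sum, ← Finset.mul_sum, ← Finset.mul_sum, bbG0, bbG1, bbG2]
  ring

lemma famL1 (m : ℕ) (x p q r : ℝ) :
    ∑ k ∈ range (m+3), ((m.choose k : ℝ) * x ^ k * (1-x) ^ (m+2-k-1)) * (p + q * k + r * k * ((k:ℝ)-1))
      = (1-x) * (p + q * m * x + r * (m * ((m:ℝ)-1) * x^2)) := by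
  rw [← bbGcomb m x p q r, Finset.mul_sum]
  rw [← Finset.sum_subset (Finset.range_subset_range.2 (by omega : m+1 ≤ m+3))
    (fun k _ hk => by
      have : m < k := by simpa using hk
      simp [Nat.choose_eq_zero_of_lt this])]
  refine Finset.sum_congr rfl fun k hk => ?_
  have hk' : k ≤ m := by simpa [Nat.lt_succ_iff] using hk
  have : m + 2 - k - 1 = (m - k) + 1 := by omega
  rw [this, pow_succ, bbG]
  ring

lemma famL2 (m : ℕ) (x p q r : ℝ) :
    ∑ k ∈ range (m+3), ((if 2 ≤ k then ((m.choose (k-2)) : ℝ) else 0) * x ^ (k-1) * (1-x) ^ (m+2-k)) * (p + q * k + r * k * ((k:ℝ)-1))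
      = x * ((p + 2*q + 2*r) + (q + 4*r) * m * x + r * (m * ((m:ℝ)-1) * x^2)) := by
  rw [show m + 3 = (m+1) + 1 + 1 by ring, Finset.sum_range_succ', Finset.sum_range_succ']
  rw [← bbGcomb m x (p + 2*q + 2*r) (q + 4*r) r, Finset.mul_sum]
  norm_num
  refine Finset.sum_congr rfl fun j hj => ?_
  have e1 : j + 1 + 1 - 2 = j := by omega
  have e3 : m + 2 - (j + 1 + 1) = m - j := by omega
  rw [e1, e3, bbG]
  ring

lemma famL3 (m : ℕ) (x p q r : ℝ) :
    ∑ k ∈ range (m+3), (((m+2).choose k : ℝ) * x ^ k * (1-x) ^ (m+2-k)) * (p + q * k + r * k * ((k:ℝ)-1))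
      = p + q * ((m:ℝ)+2) * x + r * (((m:ℝ)+2) * ((m:ℝ)+1) * x^2) := by
  have h := bbGcomb (m+2) x p q r
  rw [show (m+2)+1 = m+3 by omega] at h
  have l : ∑ k ∈ range (m+3), (((m+2).choose k : ℝ) * x ^ k * (1-x) ^ (m+2-k)) * (p + q * k + r * k * ((k:ℝ)-1))
      = ∑ k ∈ range (m+3), bbG (m+2) k x * (p + q * k + r * k * ((k:ℝ)-1)) := by
    refine Finset.sum_congr rfl fun k _ => ?_
    rw [bbG]
  rw [l, h]
  push_cast
  ring

lemma sum_bernP (m : ℕ) (α x p q r : ℝ) :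
    ∑ k ∈ range (m+3), bernP (m+2) k α x * (p + q * k + r * k * ((k:ℝ)-1))
      = (1-α) * ((1-x) * (p + q * m * x + r * (m * ((m:ℝ)-1) * x^2))
          + x * ((p + 2*q + 2*r) + (q + 4*r) * m * x + r * (m * ((m:ℝ)-1) * x^2)))
        + α * (p + q * ((m:ℝ)+2) * x + r * (((m:ℝ)+2) * ((m:ℝ)+1) * x^2)) := by
  have expand : ∀ k ∈ range (m+3), bernP (m+2) k α x * (p + q * k + r * k * ((k:ℝ)-1))
      = (1-α) * (((m.choose k : ℝ) * x ^ k * (1-x) ^ (m+2-k-1)) * (p + q * k + r * k * ((k:ℝ)-1)))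
        + (1-α) * (((if 2 ≤ k then ((m.choose (k-2)) : ℝ) else 0) * x ^ (k-1) * (1-x) ^ (m+2-k)) * (p + q * k + r * k * ((k:ℝ)-1)))
        + α * ((((m+2).choose k : ℝ) * x ^ k * (1-x) ^ (m+2-k)) * (p + q * k + r * k * ((k:ℝ)-1))) := by
    intro k _
    simp only [bernP, Nat.add_sub_cancel]
    ring
  rw [Finset.sum_congr rfl expand, Finset.sum_add_distrib, Finset.sum_add_distrib,
    ← Finset.mul_sum, ← Finset.mul_sum, ← Finset.mul_sum, famL1, famL2, famL3]
  ring

/-! ### Closed form for the second central moment -/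

set_option maxHeartbeats 1000000 in
lemma G_closed (m : ℕ) (α ρ x : ℝ) (hρ : 0 < ρ) :
    G (m+2) α ρ (fun t => (t - x) ^ 2) x
      = ((x*(1-x)) * (ρ*(((m:ℝ)+2) + (((m:ℝ)+2) - 2*α + 2)*ρ) - 6) + 2)
          / (((((m:ℝ)+2))*ρ+2) * ((((m:ℝ)+2))*ρ+3)) := by
  have hm0 : (0:ℝ) ≤ (m:ℝ) := Nat.cast_nonneg m
  have hD2 : (0:ℝ) < ((m:ℝ)+2)*ρ+2 := by nlinarith
  have hD3 : (0:ℝ) < ((m:ℝ)+2)*ρ+3 := by nlinarith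
  set D2 : ℝ := ((m:ℝ)+2)*ρ+2 with hD2def
  set D3 : ℝ := ((m:ℝ)+2)*ρ+3 with hD3def
  set p : ℝ := 2/(D2*D3) - 2*x/D2 + x^2 with hp
  set q : ℝ := (ρ^2+3*ρ)/(D2*D3) - 2*x*ρ/D2 with hq
  set r : ℝ := ρ^2/(D2*D3) with hr
  have key : ∀ k ∈ Finset.range (m+2+1),
      bernP (m+2) k α x * (∫ t in (0:ℝ)..1, muD (m+2) k ρ t * (t - x) ^ 2)
        = bernP (m+2) k α x * (p + q * k + r * k * ((k:ℝ)-1)) := by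
    intro k hk
    congr 1
    have hkm : (k:ℝ) ≤ (m:ℝ)+2 := by
      have := Finset.mem_range.1 hk
      have : k ≤ m+2 := by omega
      calc (k:ℝ) ≤ ((m+2:ℕ):ℝ) := by exact_mod_cast this
        _ = (m:ℝ)+2 := by push_cast; ring
    have ha : (0:ℝ) ≤ (k:ℝ) * ρ := by positivity
    have hb : (0:ℝ) ≤ (((m+2:ℕ):ℝ) - (k:ℝ)) * ρ := by
      apply mul_nonneg _ hρ.le
      push_cast
      linarith
    have hmi := moment_integral (a := (k:ℝ)*ρ) (b := (((m+2:ℕ):ℝ) - (k:ℝ))*ρ) x ha hb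
    simp only [muD]
    rw [hmi]
    have hcast : ((m+2:ℕ):ℝ) = (m:ℝ)+2 := by push_cast; ring
    rw [hcast]
    have hs1 : ((k:ℝ)*ρ) + (((m:ℝ)+2) - (k:ℝ))*ρ + 2 = D2 := by rw [hD2def]; ring
    have hs2 : ((k:ℝ)*ρ) + (((m:ℝ)+2) - (k:ℝ))*ρ + 3 = D3 := by rw [hD3def]; ring
    rw [hs1, hs2, hp, hq, hr]
    field_simp
    ring
  show (∑ k ∈ Finset.range (m+2+1), bernP (m+2) k α x * ∫ t in (0:ℝ)..1, muD (m+2) k ρ t * (t-x)^2) = _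
  rw [Finset.sum_congr rfl key, show m+2+1 = m+3 by omega, sum_bernP m α x p q r,
    hp, hq, hr, hD2def, hD3def]
  field_simp
  ring

theorem G_central_moment_two_bound (α ρ : ℝ)
    (hα : α ∈ Set.Icc (0:ℝ) 1) (hρ : 0 < ρ) :
    ∃ X : ℝ, 0 < X ∧ ∀ n : ℕ, 2 ≤ n → ∀ x ∈ Set.Icc (0:ℝ) 1,
      G n α ρ (fun t => (t - x) ^ 2) x ≤
          X * (x * (1 - x)) / (1 + (n : ℝ) * ρ) + X / (1 + (n : ℝ) * ρ) ^ 2 ∧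
      G n α ρ (fun t => (t - x) ^ 2) x ≤ X / (1 + (n : ℝ) * ρ) := by
  obtain ⟨hα0, hα1⟩ := hα
  refine ⟨3 + 2*ρ, by linarith, ?_⟩
  intro n hn x hx
  obtain ⟨hx0, hx1⟩ := hx
  obtain ⟨m, rfl⟩ : ∃ m, n = m + 2 := ⟨n - 2, by omega⟩
  have hm0 : (0:ℝ) ≤ (m:ℝ) := Nat.cast_nonneg m
  have hcast : ((m+2:ℕ):ℝ) = (m:ℝ)+2 := by push_cast; ring
  set nr : ℝ := (m:ℝ)+2 with hnr
  have hN : (1:ℝ) ≤ 1 + nr*ρ := by nlinarith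
  have hN0 : (0:ℝ) < 1 + nr*ρ := by linarith
  set N : ℝ := 1 + nr*ρ with hNdef
  have hD2 : (0:ℝ) < nr*ρ+2 := by nlinarith
  have hD3 : (0:ℝ) < nr*ρ+3 := by nlinarith
  have hu0 : (0:ℝ) ≤ x*(1-x) := mul_nonneg hx0 (by linarith)
  have hu4 : x*(1-x) ≤ 1/4 := by nlinarith [sq_nonneg (x - 1/2)]
  clear_value nr N
  have hG := G_closed m α ρ x hρ
  rw [← hnr] at hG
  -- main bound
  have hmain : G (m+2) α ρ (fun t => (t - x) ^ 2) x ≤ ((1+2*ρ)*(x*(1-x))*N + 2)/N^2 := by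
    rw [hG]
    have num_le : (x*(1-x)) * (ρ*(nr + (nr - 2*α + 2)*ρ) - 6) + 2 ≤ (1+2*ρ)*(x*(1-x))*N + 2 := by
      have key : 0 ≤ (x*(1-x)) * ((1+2*ρ)*N - (ρ*(nr + (nr - 2*α + 2)*ρ) - 6)) := by
        apply mul_nonneg hu0
        have : (1+2*ρ)*N - (ρ*(nr + (nr - 2*α + 2)*ρ) - 6) = 7 + 2*ρ + (m:ℝ)*ρ^2 + 2*α*ρ^2 := by
          rw [hNdef, hnr]; ring
        rw [this]
        have h1 : 0 ≤ (m:ℝ)*ρ^2 := by positivity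
        have h2 : 0 ≤ 2*α*ρ^2 := by positivity
        linarith
      nlinarith [key]
    have hnum_pos : (0:ℝ) ≤ (1+2*ρ)*(x*(1-x))*N + 2 := by
      have : 0 ≤ (1+2*ρ)*(x*(1-x))*N := by positivity
      linarith
    have hdenom : N^2 ≤ (nr*ρ+2)*(nr*ρ+3) := by nlinarith
    exact div_le_div₀ hnum_pos num_le (by positivity) hdenom
  constructor
  · refine le_trans hmain ?_
    have heq : ((1+2*ρ)*(x*(1-x))*N + 2)/N^2 = (1+2*ρ)*(x*(1-x))/N + 2/N^2 := by
      field_simp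
    rw [heq]
    have hgoalcast : (1 + ((m+2:ℕ):ℝ)*ρ) = N := by rw [hcast, hNdef]
    rw [hgoalcast]
    have husq : x*(1-x)*N^2 ≤ (1/4)*N^2 :=
      mul_le_mul_of_nonneg_right hu4 (sq_nonneg N)
    apply add_le_add
    · exact (div_le_div_iff_of_pos_right hN0).2 (mul_le_mul_of_nonneg_right (by linarith) hu0)
    · exact (div_le_div_iff_of_pos_right (by positivity)).2 (by linarith)
  · refine le_trans hmain ?_
    have hgoalcast : (1 + ((m+2:ℕ):ℝ)*ρ) = N := by rw [hcast, hNdef]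
    rw [hgoalcast, div_le_div_iff₀ (by positivity) hN0]
    have husq : x*(1-x)*N^2 ≤ (1/4)*N^2 :=
      mul_le_mul_of_nonneg_right hu4 (sq_nonneg N)
    have h1 : (1+2*ρ)*(x*(1-x)*N^2) ≤ (1+2*ρ)*((1/4)*N^2) :=
      mul_le_mul_of_nonneg_left husq (by linarith)
    have h2 : N ≤ N^2 := by nlinarith
    have h3 : 0 ≤ ρ*N^2 := by positivity
    have expand : ((1+2*ρ)*(x*(1-x))*N + 2)*N = (1+2*ρ)*(x*(1-x)*N^2) + 2*N := by ring
    rw [expand]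
    linarith [h1, h2, h3, sq_nonneg N]
end
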